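/- Let n ∈ ℕ, let A be an n×n real symmetric matrix, let k be an index, and let B := A − e_k e_kᵀ, i.e. B equals A except that its (k,k) entry is decreased by 1. Assume both A and B are invertible. Then for every vector c ∈ ℝⁿ, cᵀ(B⁻¹ − A⁻¹)c = (cᵀ · adjugate(A) · e_k)² / (det A · det B), where e_k is the k-th standard basis vector. -/

import Mathlib

open Matrix

/-- **Rank-one resolvent difference as a square over determinants** (equation (1528)):
for a real symmetric invertible `A` and `B = A − e_k e_kᵀ` invertible,
`cᵀ(B⁻¹ − A⁻¹)c = (cᵀ · adj(A) · e_k)² / (det A · det B)`. -/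
theorem rank_one_resolvent_difference_sq {n : ℕ}
    (A : Matrix (Fin n) (Fin n) ℝ) (hA : A.IsSymm) (k : Fin n)
    (B : Matrix (Fin n) (Fin n) ℝ) (hB : B = A - Matrix.single k k 1)
    (hAu : IsUnit A.det) (hBu : IsUnit B.det) (c : Fin n → ℝ) :
    c ⬝ᵥ ((B⁻¹ - A⁻¹) *ᵥ c)
      = (c ⬝ᵥ (A.adjugate *ᵥ Pi.single k 1)) ^ 2 / (A.det * B.det) := by
  have hAd : A.det ≠ 0 := hAu.ne_zero
  have hBd : B.det ≠ 0 := hBu.ne_zero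
  -- adjugate columns agree
  have hadj : ∀ i, A.adjugate i k = B.adjugate i k := by
    intro i
    rw [adjugate_apply, adjugate_apply]
    congr 1
    ext a b
    rcases eq_or_ne a k with rfl | h
    · simp
    · simp [hB, Matrix.updateRow_ne h, Matrix.single, Ne.symm h]
  -- key resolvent identity
  have hAB : A - B = Matrix.single k k 1 := by rw [hB]; abel
  have key : B⁻¹ - A⁻¹ = B⁻¹ * Matrix.single k k 1 * A⁻¹ := by
    rw [← hAB, Matrix.mul_sub, Matrix.sub_mul, Matrix.mul_assoc,
      Matrix.mul_nonsing_inv A hAu, Matrix.mul_one,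
      Matrix.nonsing_inv_mul B hBu, Matrix.one_mul]
  have hE : Matrix.single k k (1:ℝ) *ᵥ (A⁻¹ *ᵥ c)
      = Pi.single k ((A⁻¹ *ᵥ c) k) := by
    funext i
    by_cases h : i = k
    · subst h
      simp [Matrix.mulVec, dotProduct, Matrix.single, ite_and]
    · simp [Matrix.mulVec, dotProduct, Matrix.single, Pi.single_apply,
        ite_and, h, Ne.symm h]
  have hAsymm : (A⁻¹)ᵀ = A⁻¹ := by
    rw [Matrix.transpose_nonsing_inv, hA.eq]
  have hsymm : ∀ j, A⁻¹ k j = A⁻¹ j k := fun j =>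
    (congrFun (congrFun hAsymm k) j).symm.trans (Matrix.transpose_apply A⁻¹ k j)
  have huk : (A⁻¹ *ᵥ c) k = c ⬝ᵥ (A⁻¹ *ᵥ Pi.single k 1) := by
    rw [Matrix.mulVec_single]
    simp only [dotProduct, Matrix.mulVec, mul_one]
    exact Finset.sum_congr rfl fun j _ => by rw [hsymm j, mul_comm]; simp
  have hcol : ∀ (M : Matrix (Fin n) (Fin n) ℝ),
      M⁻¹ *ᵥ Pi.single k (1:ℝ) = Ring.inverse M.det • (M.adjugate *ᵥ Pi.single k 1) := by
    intro M
    rw [Matrix.inv_def, Matrix.smul_mulVec]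
  have hBcol : c ⬝ᵥ (B⁻¹ *ᵥ Pi.single k 1)
      = (c ⬝ᵥ (A.adjugate *ᵥ Pi.single k 1)) / B.det := by
    rw [hcol, dotProduct_smul, Ring.inverse_eq_inv]
    have h2 : B.adjugate *ᵥ Pi.single k (1:ℝ) = A.adjugate *ᵥ Pi.single k 1 := by
      funext i
      simp [Matrix.mulVec_single, hadj i]
    rw [h2, smul_eq_mul, div_eq_inv_mul]
  have hAcol : c ⬝ᵥ (A⁻¹ *ᵥ Pi.single k 1)
      = (c ⬝ᵥ (A.adjugate *ᵥ Pi.single k 1)) / A.det := by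
    rw [hcol, dotProduct_smul, Ring.inverse_eq_inv, smul_eq_mul, div_eq_inv_mul]
  rw [key, ← Matrix.mulVec_mulVec, ← Matrix.mulVec_mulVec, hE]
  have hsingle : B⁻¹ *ᵥ Pi.single k ((A⁻¹ *ᵥ c) k)
      = (A⁻¹ *ᵥ c) k • (B⁻¹ *ᵥ Pi.single k 1) := by
    funext i
    simp [Matrix.mulVec_single, mul_comm]
  rw [hsingle, dotProduct_smul, huk, smul_eq_mul, hBcol, hAcol]
  field_simp
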